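/- Let A⁺, A⁻ : ℝ → ℝ and u⁺, u⁻, û, c ∈ ℝ. Assume the Rankine–Hugoniot condition A⁺(u⁺) = A⁻(u⁻) and that the Kruzkov entropy inequality holds at c. Then: (iii) if u⁺ ≤ û < c < u⁻, then A⁻(c) ≤ A⁻(u⁻); (iv) if u⁺ < c < û ≤ u⁻, then A⁺(c) ≤ A⁺(u⁺). -/
import Mathlib

open MeasureTheory Filter Set

/-- The Kruzkov entropy inequality at `c` for data `(um, up, uh)`:
`A⁺(u⁺)·sign(u⁺−c) − 2·sign(u⁺−û)·A⁺(c)·𝟙_{(û,u⁺)}(c) ≤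
 A⁻(u⁻)·sign(u⁻−c) − 2·sign(u⁻−û)·A⁻(c)·𝟙_{(û,u⁻)}(c)`. -/
def KruzkovIneq (Ap Am : ℝ → ℝ) (um up uh c : ℝ) : Prop :=
  Ap up * Real.sign (up - c) -
      2 * Real.sign (up - uh) * Ap c * Set.indicator (Set.uIoo uh up) (1 : ℝ → ℝ) c
    ≤ Am um * Real.sign (um - c) -
      2 * Real.sign (um - uh) * Am c * Set.indicator (Set.uIoo uh um) (1 : ℝ → ℝ) c

theorem stmt_10 (Ap Am : ℝ → ℝ) (up um uh c : ℝ)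
    (hRH : Ap up = Am um)
    (hkruz : KruzkovIneq Ap Am um up uh c) :
    (up ≤ uh → uh < c → c < um → Am c ≤ Am um) ∧
    (up < c → c < uh → uh ≤ um → Ap c ≤ Ap up) := by
  unfold KruzkovIneq at hkruz
  constructor
  · intro h1 h2 h3
    rw [Set.uIoo_of_ge h1, Set.uIoo_of_le (by linarith : uh ≤ um)] at hkruz
    rw [Set.indicator_of_notMem (by simp [Set.mem_Ioo]; intro h; linarith),
        Set.indicator_of_mem (by simp [Set.mem_Ioo]; exact ⟨h2, h3⟩)] at hkruz
    rw [Real.sign_of_neg (by linarith : up - c < 0),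
        Real.sign_of_pos (by linarith : 0 < um - c),
        Real.sign_of_pos (by linarith : 0 < um - uh)] at hkruz
    simp only [Pi.one_apply, mul_zero, mul_one, sub_zero] at hkruz
    linarith
  · intro h1 h2 h3
    rw [Set.uIoo_of_ge (by linarith : up ≤ uh), Set.uIoo_of_le h3] at hkruz
    rw [Set.indicator_of_mem (by simp [Set.mem_Ioo]; exact ⟨h1, h2⟩),
        Set.indicator_of_notMem (by simp [Set.mem_Ioo]; intro h; linarith)] at hkruz
    rw [Real.sign_of_neg (by linarith : up - c < 0),
        Real.sign_of_pos (by linarith : 0 < um - c),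
        Real.sign_of_neg (by linarith : up - uh < 0)] at hkruz
    simp only [Pi.one_apply, mul_zero, mul_one, sub_zero] at hkruz
    linarith
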